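/- The function β(κ) = (sinh(2κ) - 2κ) / (κ²(2κ + sinh(2κ))) is strictly decreasing on (0, ∞), with limit 1/3 as κ → 0⁺ and limit 0 as κ → +∞. -/

import Mathlib

open Real Filter Set

private lemma pos_of_deriv_pos (f g : ℝ → ℝ) (hd : ∀ t, HasDerivAt f (g t) t)
    (h0 : f 0 = 0) (hg : ∀ t, 0 < t → 0 < g t) : ∀ t, 0 < t → 0 < f t := by
  intro t ht
  have hmono : StrictMonoOn f (Set.Ici 0) := by
    apply strictMonoOn_of_deriv_pos (convex_Ici 0)
    · exact fun x _ => (hd x).continuousAt.continuousWithinAt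
    · intro x hx
      rw [interior_Ici] at hx
      rw [(hd x).deriv]
      exact hg x hx
  have h := hmono (Set.self_mem_Ici) (Set.mem_Ici.2 ht.le) ht
  rw [h0] at h
  exact h

private lemma c1_pos : ∀ t : ℝ, 0 < t → 0 < Real.cosh t - 1 - t ^ 2 / 2 := by
  apply pos_of_deriv_pos _ (fun t => Real.sinh t - t)
  · intro t
    have h : HasDerivAt (fun t : ℝ => Real.cosh t - 1 - t ^ 2 / 2)
        (Real.sinh t - (2 : ℕ) * t ^ (2 - 1) / 2) t :=
      ((Real.hasDerivAt_cosh t).sub_const 1).sub ((hasDerivAt_pow 2 t).div_const 2)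
    convert h using 1; push_cast; ring
  · simp
  · intro t ht
    have := (Real.self_lt_sinh_iff (x := t)).2 ht
    linarith

private lemma p6_pos : ∀ t : ℝ, 0 < t →
    0 < 64 * Real.cosh t ^ 2 + 64 * Real.sinh t ^ 2 - 48 * Real.cosh t
      - 22 * (t * Real.sinh t) - 2 * (t ^ 2 * Real.cosh t) := by
  intro t ht
  have hu : 1 ≤ Real.cosh t := Real.one_le_cosh t
  have hsq : Real.sinh t ^ 2 = Real.cosh t ^ 2 - 1 := Real.sinh_sq t
  have hts : t < Real.sinh t := (Real.self_lt_sinh_iff (x := t)).2 ht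
  have hs : 0 < Real.sinh t := lt_trans ht hts
  have h1 : t * Real.sinh t ≤ Real.sinh t ^ 2 := by nlinarith
  have h2 : t ^ 2 ≤ 2 * (Real.cosh t - 1) := by have := c1_pos t ht; linarith
  have h3 : t ^ 2 * Real.cosh t ≤ 2 * (Real.cosh t - 1) * Real.cosh t :=
    mul_le_mul_of_nonneg_right h2 (Real.cosh_pos t).le
  nlinarith [sq_nonneg (Real.cosh t - 1)]

private lemma p5_pos : ∀ t : ℝ, 0 < t →
    0 < 64 * (Real.sinh t * Real.cosh t) - 30 * Real.sinh t
      - 18 * (t * Real.cosh t) - 2 * (t ^ 2 * Real.sinh t) := by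
  apply pos_of_deriv_pos _ (fun t =>
    64 * Real.cosh t ^ 2 + 64 * Real.sinh t ^ 2 - 48 * Real.cosh t
      - 22 * (t * Real.sinh t) - 2 * (t ^ 2 * Real.cosh t))
  · intro t
    have h : HasDerivAt (fun t : ℝ =>
        64 * (Real.sinh t * Real.cosh t) - 30 * Real.sinh t
          - 18 * (t * Real.cosh t) - 2 * (t ^ 2 * Real.sinh t))
        (64 * (Real.cosh t * Real.cosh t + Real.sinh t * Real.sinh t)
          - 30 * Real.cosh t - 18 * (1 * Real.cosh t + t * Real.sinh t)
          - 2 * ((2 : ℕ) * t ^ (2 - 1) * Real.sinh t + t ^ 2 * Real.cosh t)) t :=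
      (((((Real.hasDerivAt_sinh t).mul (Real.hasDerivAt_cosh t)).const_mul 64).sub
        ((Real.hasDerivAt_sinh t).const_mul 30)).sub
        (((hasDerivAt_id t).mul (Real.hasDerivAt_cosh t)).const_mul 18)).sub
        (((hasDerivAt_pow 2 t).mul (Real.hasDerivAt_sinh t)).const_mul 2)
    convert h using 1; push_cast; ring
  · simp
  · exact p6_pos

private lemma p4_pos : ∀ t : ℝ, 0 < t →
    0 < 16 * Real.cosh t ^ 2 + 16 * Real.sinh t ^ 2 - 16 * Real.cosh t
      - 14 * (t * Real.sinh t) - 2 * (t ^ 2 * Real.cosh t) := by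
  apply pos_of_deriv_pos _ (fun t =>
    64 * (Real.sinh t * Real.cosh t) - 30 * Real.sinh t
      - 18 * (t * Real.cosh t) - 2 * (t ^ 2 * Real.sinh t))
  · intro t
    have h : HasDerivAt (fun t : ℝ =>
        16 * Real.cosh t ^ 2 + 16 * Real.sinh t ^ 2 - 16 * Real.cosh t
          - 14 * (t * Real.sinh t) - 2 * (t ^ 2 * Real.cosh t))
        (16 * ((2 : ℕ) * Real.cosh t ^ (2 - 1) * Real.sinh t)
          + 16 * ((2 : ℕ) * Real.sinh t ^ (2 - 1) * Real.cosh t)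
          - 16 * Real.sinh t - 14 * (1 * Real.sinh t + t * Real.cosh t)
          - 2 * ((2 : ℕ) * t ^ (2 - 1) * Real.cosh t + t ^ 2 * Real.sinh t)) t :=
      (((((((Real.hasDerivAt_cosh t).pow 2).const_mul 16).add
        (((Real.hasDerivAt_sinh t).pow 2).const_mul 16)).sub
        ((Real.hasDerivAt_cosh t).const_mul 16)).sub
        (((hasDerivAt_id t).mul (Real.hasDerivAt_sinh t)).const_mul 14)).sub
        (((hasDerivAt_pow 2 t).mul (Real.hasDerivAt_cosh t)).const_mul 2))
    convert h using 1; push_cast; ring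
  · simp
  · exact p5_pos

private lemma p3_pos : ∀ t : ℝ, 0 < t →
    0 < 16 * (Real.sinh t * Real.cosh t) - 6 * Real.sinh t
      - 10 * (t * Real.cosh t) - 2 * (t ^ 2 * Real.sinh t) := by
  apply pos_of_deriv_pos _ (fun t =>
    16 * Real.cosh t ^ 2 + 16 * Real.sinh t ^ 2 - 16 * Real.cosh t
      - 14 * (t * Real.sinh t) - 2 * (t ^ 2 * Real.cosh t))
  · intro t
    have h : HasDerivAt (fun t : ℝ =>
        16 * (Real.sinh t * Real.cosh t) - 6 * Real.sinh t
          - 10 * (t * Real.cosh t) - 2 * (t ^ 2 * Real.sinh t))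
        (16 * (Real.cosh t * Real.cosh t + Real.sinh t * Real.sinh t)
          - 6 * Real.cosh t - 10 * (1 * Real.cosh t + t * Real.sinh t)
          - 2 * ((2 : ℕ) * t ^ (2 - 1) * Real.sinh t + t ^ 2 * Real.cosh t)) t :=
      (((((Real.hasDerivAt_sinh t).mul (Real.hasDerivAt_cosh t)).const_mul 16).sub
        ((Real.hasDerivAt_sinh t).const_mul 6)).sub
        (((hasDerivAt_id t).mul (Real.hasDerivAt_cosh t)).const_mul 10)).sub
        (((hasDerivAt_pow 2 t).mul (Real.hasDerivAt_sinh t)).const_mul 2)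
    convert h using 1; push_cast; ring
  · simp
  · exact p4_pos

private lemma p2_pos : ∀ t : ℝ, 0 < t →
    0 < 4 * Real.cosh t ^ 2 + 4 * Real.sinh t ^ 2 - 6 * (t * Real.sinh t)
      - 2 * (t ^ 2 * Real.cosh t) - 4 := by
  apply pos_of_deriv_pos _ (fun t =>
    16 * (Real.sinh t * Real.cosh t) - 6 * Real.sinh t
      - 10 * (t * Real.cosh t) - 2 * (t ^ 2 * Real.sinh t))
  · intro t
    have h : HasDerivAt (fun t : ℝ =>
        4 * Real.cosh t ^ 2 + 4 * Real.sinh t ^ 2 - 6 * (t * Real.sinh t)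
          - 2 * (t ^ 2 * Real.cosh t) - 4)
        (4 * ((2 : ℕ) * Real.cosh t ^ (2 - 1) * Real.sinh t)
          + 4 * ((2 : ℕ) * Real.sinh t ^ (2 - 1) * Real.cosh t)
          - 6 * (1 * Real.sinh t + t * Real.cosh t)
          - 2 * ((2 : ℕ) * t ^ (2 - 1) * Real.cosh t + t ^ 2 * Real.sinh t)) t :=
      (((((Real.hasDerivAt_cosh t).pow 2).const_mul 4).add
        (((Real.hasDerivAt_sinh t).pow 2).const_mul 4)).sub
        (((hasDerivAt_id t).mul (Real.hasDerivAt_sinh t)).const_mul 6)).sub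
        (((hasDerivAt_pow 2 t).mul (Real.hasDerivAt_cosh t)).const_mul 2) |>.sub_const 4
    convert h using 1; push_cast; ring
  · norm_num
  · exact p3_pos

private lemma p1_pos : ∀ t : ℝ, 0 < t →
    0 < 4 * (Real.sinh t * Real.cosh t) + 2 * Real.sinh t - 2 * (t * Real.cosh t)
      - 2 * (t ^ 2 * Real.sinh t) - 4 * t := by
  apply pos_of_deriv_pos _ (fun t =>
    4 * Real.cosh t ^ 2 + 4 * Real.sinh t ^ 2 - 6 * (t * Real.sinh t)
      - 2 * (t ^ 2 * Real.cosh t) - 4)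
  · intro t
    have h : HasDerivAt (fun t : ℝ =>
        4 * (Real.sinh t * Real.cosh t) + 2 * Real.sinh t - 2 * (t * Real.cosh t)
          - 2 * (t ^ 2 * Real.sinh t) - 4 * t)
        (4 * (Real.cosh t * Real.cosh t + Real.sinh t * Real.sinh t)
          + 2 * Real.cosh t - 2 * (1 * Real.cosh t + t * Real.sinh t)
          - 2 * ((2 : ℕ) * t ^ (2 - 1) * Real.sinh t + t ^ 2 * Real.cosh t)
          - 4 * 1) t :=
      ((((((Real.hasDerivAt_sinh t).mul (Real.hasDerivAt_cosh t)).const_mul 4).add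
        ((Real.hasDerivAt_sinh t).const_mul 2)).sub
        (((hasDerivAt_id t).mul (Real.hasDerivAt_cosh t)).const_mul 2)).sub
        (((hasDerivAt_pow 2 t).mul (Real.hasDerivAt_sinh t)).const_mul 2)).sub
        ((hasDerivAt_id t).const_mul 4)
    convert h using 1; push_cast; ring
  · simp
  · exact p2_pos

private lemma p0_pos : ∀ t : ℝ, 0 < t →
    0 < 2 * Real.sinh t ^ 2 + 2 * (t * Real.sinh t) - 2 * (t ^ 2 * Real.cosh t)
      - 2 * t ^ 2 := by
  apply pos_of_deriv_pos _ (fun t =>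
    4 * (Real.sinh t * Real.cosh t) + 2 * Real.sinh t - 2 * (t * Real.cosh t)
      - 2 * (t ^ 2 * Real.sinh t) - 4 * t)
  · intro t
    have h : HasDerivAt (fun t : ℝ =>
        2 * Real.sinh t ^ 2 + 2 * (t * Real.sinh t) - 2 * (t ^ 2 * Real.cosh t)
          - 2 * t ^ 2)
        (2 * ((2 : ℕ) * Real.sinh t ^ (2 - 1) * Real.cosh t)
          + 2 * (1 * Real.sinh t + t * Real.cosh t)
          - 2 * ((2 : ℕ) * t ^ (2 - 1) * Real.cosh t + t ^ 2 * Real.sinh t)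
          - 2 * ((2 : ℕ) * t ^ (2 - 1))) t :=
      (((((Real.hasDerivAt_sinh t).pow 2).const_mul 2).add
        (((hasDerivAt_id t).mul (Real.hasDerivAt_sinh t)).const_mul 2)).sub
        (((hasDerivAt_pow 2 t).mul (Real.hasDerivAt_cosh t)).const_mul 2)).sub
        ((hasDerivAt_pow 2 t).const_mul 2)
    convert h using 1; push_cast; ring
  · simp
  · exact p1_pos

-- sinh x ≥ x + x³/6
private lemma b1_pos : ∀ t : ℝ, 0 < t → 0 < Real.sinh t - t - t ^ 3 / 6 := by
  apply pos_of_deriv_pos _ (fun t => Real.cosh t - 1 - t ^ 2 / 2)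
  · intro t
    have h : HasDerivAt (fun t : ℝ => Real.sinh t - t - t ^ 3 / 6)
        (Real.cosh t - 1 - (3 : ℕ) * t ^ (3 - 1) / 6) t :=
      ((Real.hasDerivAt_sinh t).sub (hasDerivAt_id t)).sub ((hasDerivAt_pow 3 t).div_const 6)
    convert h using 1; push_cast; ring
  · simp
  · exact c1_pos

-- sinh x - x ≤ x³/6 cosh x : chain h1, h2, h3
private lemma hh1_pos : ∀ t : ℝ, 0 < t → 0 < t * Real.cosh t - Real.sinh t := by
  apply pos_of_deriv_pos _ (fun t => t * Real.sinh t)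
  · intro t
    have h : HasDerivAt (fun t : ℝ => t * Real.cosh t - Real.sinh t)
        (1 * Real.cosh t + t * Real.sinh t - Real.cosh t) t :=
      ((hasDerivAt_id t).mul (Real.hasDerivAt_cosh t)).sub (Real.hasDerivAt_sinh t)
    convert h using 1; ring
  · simp
  · intro t ht
    exact mul_pos ht (by have := (Real.self_lt_sinh_iff (x := t)).2 ht; linarith)

private lemma hh2_pos : ∀ t : ℝ, 0 < t → 0 < t ^ 2 / 2 * Real.cosh t - Real.cosh t + 1 := by
  apply pos_of_deriv_pos _
    (fun t => (t * Real.cosh t - Real.sinh t) + t ^ 2 / 2 * Real.sinh t)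
  · intro t
    have h : HasDerivAt (fun t : ℝ => t ^ 2 / 2 * Real.cosh t - Real.cosh t + 1)
        ((2 : ℕ) * t ^ (2 - 1) / 2 * Real.cosh t + t ^ 2 / 2 * Real.sinh t - Real.sinh t) t :=
      ((((hasDerivAt_pow 2 t).div_const 2).mul (Real.hasDerivAt_cosh t)).sub
        (Real.hasDerivAt_cosh t)).add_const 1
    convert h using 1; push_cast; ring
  · simp
  · intro t ht
    have := hh1_pos t ht
    have hs : 0 < Real.sinh t := by
      have := (Real.self_lt_sinh_iff (x := t)).2 ht; linarith
    nlinarith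

private lemma hh3_pos : ∀ t : ℝ, 0 < t → 0 < t ^ 3 / 6 * Real.cosh t - Real.sinh t + t := by
  apply pos_of_deriv_pos _
    (fun t => (t ^ 2 / 2 * Real.cosh t - Real.cosh t + 1) + t ^ 3 / 6 * Real.sinh t)
  · intro t
    have h : HasDerivAt (fun t : ℝ => t ^ 3 / 6 * Real.cosh t - Real.sinh t + t)
        ((3 : ℕ) * t ^ (3 - 1) / 6 * Real.cosh t + t ^ 3 / 6 * Real.sinh t - Real.cosh t + 1) t :=
      ((((hasDerivAt_pow 3 t).div_const 6).mul (Real.hasDerivAt_cosh t)).sub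
        (Real.hasDerivAt_sinh t)).add (hasDerivAt_id t)
    convert h using 1; push_cast; ring
  · simp
  · intro t ht
    have := hh2_pos t ht
    have hs : 0 < Real.sinh t := by
      have := (Real.self_lt_sinh_iff (x := t)).2 ht; linarith
    have ht3 : 0 < t ^ 3 := by positivity
    nlinarith

private lemma beta_hasDerivAt {κ : ℝ} (hκ : 0 < κ) :
    HasDerivAt (fun κ : ℝ => (Real.sinh (2 * κ) - 2 * κ) / (κ ^ 2 * (2 * κ + Real.sinh (2 * κ))))
      ((-κ * (2 * Real.sinh (2 * κ) ^ 2 + 2 * (2 * κ * Real.sinh (2 * κ))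
          - 2 * ((2 * κ) ^ 2 * Real.cosh (2 * κ)) - 2 * (2 * κ) ^ 2))
        / (κ ^ 2 * (2 * κ + Real.sinh (2 * κ))) ^ 2) κ := by
  have h2κ : HasDerivAt (fun y : ℝ => 2 * y) 2 κ := by
    simpa using (hasDerivAt_id κ).const_mul 2
  have hs2 : HasDerivAt (fun y : ℝ => Real.sinh (2 * y)) (Real.cosh (2 * κ) * 2) κ := h2κ.sinh
  have hnum : HasDerivAt (fun y : ℝ => Real.sinh (2 * y) - 2 * y)
      (Real.cosh (2 * κ) * 2 - 2) κ := hs2.sub h2κ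
  have hden : HasDerivAt (fun y : ℝ => y ^ 2 * (2 * y + Real.sinh (2 * y)))
      ((2 : ℕ) * κ ^ (2 - 1) * (2 * κ + Real.sinh (2 * κ))
        + κ ^ 2 * (2 + Real.cosh (2 * κ) * 2)) κ :=
    (hasDerivAt_pow 2 κ).mul (h2κ.add hs2)
  have hne : κ ^ 2 * (2 * κ + Real.sinh (2 * κ)) ≠ 0 := by
    have hs : 0 < Real.sinh (2 * κ) := by
      have := (Real.self_lt_sinh_iff (x := 2 * κ)).2 (by linarith); linarith
    positivity
  have h : HasDerivAt (fun y : ℝ => (Real.sinh (2 * y) - 2 * y) / (y ^ 2 * (2 * y + Real.sinh (2 * y))))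
      _ κ := hnum.div hden hne
  convert h using 1
  push_cast
  ring

private lemma sinh_2k_pos {κ : ℝ} (hκ : 0 < κ) : 2 * κ < Real.sinh (2 * κ) :=
  (Real.self_lt_sinh_iff (x := 2 * κ)).2 (by linarith)

private lemma den_pos {κ : ℝ} (hκ : 0 < κ) :
    0 < κ ^ 2 * (2 * κ + Real.sinh (2 * κ)) := by
  have := sinh_2k_pos hκ
  have h : 0 < 2 * κ + Real.sinh (2 * κ) := by linarith
  positivity

theorem stmt_1 :
    StrictAntiOn (fun κ : ℝ => (Real.sinh (2 * κ) - 2 * κ) / (κ ^ 2 * (2 * κ + Real.sinh (2 * κ))))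
      (Set.Ioi 0) ∧
    Filter.Tendsto (fun κ : ℝ => (Real.sinh (2 * κ) - 2 * κ) / (κ ^ 2 * (2 * κ + Real.sinh (2 * κ))))
      (nhdsWithin 0 (Set.Ioi 0)) (nhds (1 / 3)) ∧
    Filter.Tendsto (fun κ : ℝ => (Real.sinh (2 * κ) - 2 * κ) / (κ ^ 2 * (2 * κ + Real.sinh (2 * κ))))
      Filter.atTop (nhds 0) := by
  set β := fun κ : ℝ => (Real.sinh (2 * κ) - 2 * κ) / (κ ^ 2 * (2 * κ + Real.sinh (2 * κ)))
    with hβ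
  refine ⟨?_, ?_, ?_⟩
  · -- Strict antitonicity
    apply strictAntiOn_of_deriv_neg (convex_Ioi 0)
    · exact fun x hx => (beta_hasDerivAt hx).continuousAt.continuousWithinAt
    · intro x hx
      rw [interior_Ioi] at hx
      rw [Set.mem_Ioi] at hx
      rw [(beta_hasDerivAt hx).deriv]
      apply div_neg_of_neg_of_pos
      · have hp := p0_pos (2 * x) (by linarith)
        have : 0 < x * (2 * Real.sinh (2 * x) ^ 2 + 2 * (2 * x * Real.sinh (2 * x))
            - 2 * ((2 * x) ^ 2 * Real.cosh (2 * x)) - 2 * (2 * x) ^ 2) :=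
          mul_pos hx hp
        linarith
      · exact pow_pos (den_pos hx) 2
  · -- limit at 0+
    have hL : Filter.Tendsto (fun κ : ℝ => (4 / 3) / (4 + (4 / 3) * κ ^ 2 * Real.cosh (2 * κ)))
        (nhdsWithin 0 (Set.Ioi 0)) (nhds (1 / 3)) := by
      have hc : ContinuousAt (fun κ : ℝ => (4 / 3) / (4 + (4 / 3) * κ ^ 2 * Real.cosh (2 * κ))) 0 := by
        apply ContinuousAt.div
        · fun_prop
        · fun_prop
        · norm_num
      have h0 : (4 : ℝ) / 3 / (4 + (4 / 3) * (0 : ℝ) ^ 2 * Real.cosh (2 * 0)) = 1 / 3 := by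
        norm_num
      have := hc.tendsto
      rw [h0] at this
      exact this.mono_left nhdsWithin_le_nhds
    have hU : Filter.Tendsto (fun κ : ℝ => (1 / 3) * Real.cosh (2 * κ))
        (nhdsWithin 0 (Set.Ioi 0)) (nhds (1 / 3)) := by
      have hc : ContinuousAt (fun κ : ℝ => (1 / 3) * Real.cosh (2 * κ)) 0 := by fun_prop
      have := hc.tendsto
      rw [show (1 : ℝ) / 3 * Real.cosh (2 * 0) = 1/3 by norm_num] at this
      exact this.mono_left nhdsWithin_le_nhds
    apply tendsto_of_tendsto_of_tendsto_of_le_of_le' hL hU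
    · -- lower bound eventually
      filter_upwards [eventually_mem_nhdsWithin] with κ hκ
      rw [Set.mem_Ioi] at hκ
      set s := Real.sinh (2 * κ)
      set c := Real.cosh (2 * κ)
      have hb1 := b1_pos (2 * κ) (by linarith)
      have hb2 := hh3_pos (2 * κ) (by linarith)
      have hc1 : (1 : ℝ) ≤ c := Real.one_le_cosh (2 * κ)
      have hden := den_pos hκ
      have hD2 : (0 : ℝ) < 4 + (4 / 3) * κ ^ 2 * c := by positivity
      rw [hβ, div_le_div_iff₀ hD2 hden]
      have hnum : (4 / 3) * κ ^ 3 ≤ s - 2 * κ := by nlinarith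
      have hden_le : κ ^ 2 * (2 * κ + s) ≤ κ ^ 3 * (4 + (4 / 3) * κ ^ 2 * c) := by nlinarith
      have h1 : (4 / 3) * κ ^ 3 * (4 + (4 / 3) * κ ^ 2 * c) ≤ (s - 2 * κ) * (4 + (4 / 3) * κ ^ 2 * c) :=
        mul_le_mul_of_nonneg_right hnum hD2.le
      nlinarith
    · -- upper bound eventually
      filter_upwards [eventually_mem_nhdsWithin] with κ hκ
      rw [Set.mem_Ioi] at hκ
      set s := Real.sinh (2 * κ)
      set c := Real.cosh (2 * κ)
      have hb2 := hh3_pos (2 * κ) (by linarith)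
      have hc1 : (1 : ℝ) ≤ c := Real.one_le_cosh (2 * κ)
      have hs := sinh_2k_pos hκ
      have hden := den_pos hκ
      rw [hβ, div_le_iff₀ hden]
      have h4 : 4 * κ ^ 3 ≤ κ ^ 2 * (2 * κ + s) := by nlinarith
      nlinarith
  · -- limit at infinity
    have hinv : Filter.Tendsto (fun κ : ℝ => (κ ^ 2)⁻¹) Filter.atTop (nhds 0) := by
      have h1 : Filter.Tendsto (fun κ : ℝ => κ ^ 2) Filter.atTop Filter.atTop :=
        tendsto_pow_atTop (by norm_num)
      exact tendsto_inv_atTop_zero.comp h1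
    apply tendsto_of_tendsto_of_tendsto_of_le_of_le' tendsto_const_nhds hinv
    · filter_upwards [Filter.eventually_gt_atTop (0 : ℝ)] with κ hκ
      have hs := sinh_2k_pos hκ
      exact div_nonneg (by linarith) (den_pos hκ).le
    · filter_upwards [Filter.eventually_gt_atTop (0 : ℝ)] with κ hκ
      have hs := sinh_2k_pos hκ
      have hden := den_pos hκ
      rw [hβ, div_le_iff₀ hden]
      have hκ2 : (0 : ℝ) < κ ^ 2 := by positivity
      have : (κ ^ 2)⁻¹ * (κ ^ 2 * (2 * κ + Real.sinh (2 * κ))) = 2 * κ + Real.sinh (2 * κ) := by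
        field_simp
      rw [this]
      linarith
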